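/- Fix u, v ∈ ℝ and d ∈ [0, 1/2). For κ > u² + v², let x(κ) = (u/√κ, v/√κ, √(1 − (u² + v²)/κ)) (a point on the unit sphere) and let β = d·κ. Then the centred Kent log-density exponent converges to the bivariate normal exponent: lim_{κ → ∞} [ κ·x₃(κ) + β·(x₁(κ)² − x₂(κ)²) − κ ] = −(1/2)·(1 − 2d)·u² − (1/2)·(1 + 2d)·v². -/

import Mathlib

open Real Filter

/-- High-concentration bivariate normal approximation to the Kent distribution:
along the scaled coordinates `x(κ) = (u/√κ, v/√κ, √(1 − (u²+v²)/κ))` with `β = d·κ`,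
the centred Kent log-density exponent `κ·x₃ + β·(x₁² − x₂²) − κ` converges, as
`κ → ∞`, to the bivariate normal exponent
`−(1/2)(1 − 2d)u² − (1/2)(1 + 2d)v²`. -/
theorem kent_high_concentration_limit (u v d : ℝ) (hd0 : 0 ≤ d) (hd : d < 1 / 2) :
    Tendsto
      (fun κ : ℝ =>
        κ * Real.sqrt (1 - (u ^ 2 + v ^ 2) / κ) +
          (d * κ) * ((u / Real.sqrt κ) ^ 2 - (v / Real.sqrt κ) ^ 2) - κ)
      atTop
      (nhds (-(1 / 2) * (1 - 2 * d) * u ^ 2 - (1 / 2) * (1 + 2 * d) * v ^ 2)) := by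
  set s : ℝ := u ^ 2 + v ^ 2 with hs
  have hs0 : 0 ≤ s := by positivity
  -- auxiliary function
  have hsqrt : Tendsto (fun κ : ℝ => Real.sqrt (1 - s / κ)) atTop (nhds 1) := by
    have h0 : Tendsto (fun κ : ℝ => s / κ) atTop (nhds 0) :=
      Tendsto.div_atTop tendsto_const_nhds tendsto_id
    have h1 : Tendsto (fun κ : ℝ => 1 - s / κ) atTop (nhds 1) := by
      simpa using (tendsto_const_nhds (x := (1:ℝ))).sub h0
    have := (Real.continuous_sqrt.tendsto 1).comp h1
    simpa [Function.comp_def] using this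
  have hg : Tendsto (fun κ : ℝ => -s / (Real.sqrt (1 - s / κ) + 1) + d * (u ^ 2 - v ^ 2))
      atTop (nhds (-(1 / 2) * (1 - 2 * d) * u ^ 2 - (1 / 2) * (1 + 2 * d) * v ^ 2)) := by
    have hden : Tendsto (fun κ : ℝ => Real.sqrt (1 - s / κ) + 1) atTop (nhds 2) := by
      have := hsqrt.add (tendsto_const_nhds (x := (1:ℝ)))
      norm_num at this
      exact this
    have hdiv : Tendsto (fun κ : ℝ => -s / (Real.sqrt (1 - s / κ) + 1)) atTop
        (nhds (-s / 2)) := (tendsto_const_nhds (x := -s)).div hden two_ne_zero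
    have := hdiv.add (tendsto_const_nhds (x := d * (u ^ 2 - v ^ 2)))
    have heq : -s / 2 + d * (u ^ 2 - v ^ 2)
        = -(1 / 2) * (1 - 2 * d) * u ^ 2 - (1 / 2) * (1 + 2 * d) * v ^ 2 := by
      rw [hs]; ring
    rwa [heq] at this
  refine hg.congr' ?_
  filter_upwards [eventually_gt_atTop (max s 1)] with κ hκ
  have hκ1 : (1:ℝ) < κ := lt_of_le_of_lt (le_max_right _ _) hκ
  have hκ0 : (0:ℝ) < κ := by linarith
  have hsκ : s < κ := lt_of_le_of_lt (le_max_left _ _) hκ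
  have hrad : 0 ≤ 1 - s / κ := by
    rw [sub_nonneg, div_le_one hκ0]; exact hsκ.le
  have hsq : Real.sqrt κ ^ 2 = κ := Real.sq_sqrt hκ0.le
  have hsqpos : (0:ℝ) < Real.sqrt κ := Real.sqrt_pos.2 hκ0
  -- rewrite the main expression
  have h1 : κ * Real.sqrt (1 - s / κ) - κ = -s / (Real.sqrt (1 - s / κ) + 1) := by
    have hd1 : 0 < Real.sqrt (1 - s / κ) + 1 := by positivity
    have h' : Real.sqrt (1 - s / κ) ^ 2 * κ = κ - s := by
      rw [Real.sq_sqrt hrad]; field_simp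
    rw [eq_div_iff hd1.ne']
    linear_combination h'
  have h2 : (d * κ) * ((u / Real.sqrt κ) ^ 2 - (v / Real.sqrt κ) ^ 2)
      = d * (u ^ 2 - v ^ 2) := by
    field_simp [hsq]
    rw [hsq]
  calc -s / (Real.sqrt (1 - s / κ) + 1) + d * (u ^ 2 - v ^ 2)
      = (κ * Real.sqrt (1 - s / κ) - κ)
        + (d * κ) * ((u / Real.sqrt κ) ^ 2 - (v / Real.sqrt κ) ^ 2) := by rw [h1, h2]
    _ = κ * Real.sqrt (1 - s / κ) +
          (d * κ) * ((u / Real.sqrt κ) ^ 2 - (v / Real.sqrt κ) ^ 2) - κ := by ring
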